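/- For p = 1, there exists a minimizer u = (u_1,…,u_k) of G(v) = Σ_{i=2}^k |v_i - v_{i-1}| + λ Σ_{i=1}^k L_i |f_i - v_i| over ℝ^k such that each u_i ∈ {f_1,…,f_k}. -/
import Mathlib


/-- Predecessor index: `i - 1` (and `0` maps to `0`). -/
def pred {k : ℕ} (i : Fin k) : Fin k :=
  ⟨i.val - 1, Nat.lt_of_le_of_lt (Nat.sub_le _ _) i.isLt⟩

/-- The discrete energy `G(v) = ∑_{i≥2} |v_i - v_{i-1}| + λ ∑_i L_i |f_i - v_i|^p`
(indices written with `Fin k`, i.e. `0,…,k-1`). -/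
noncomputable def G (k : ℕ) (lam p : ℝ) (L f : Fin k → ℝ) (v : Fin k → ℝ) : ℝ :=
  (∑ i : Fin k, if i.val = 0 then 0 else |v i - v (pred i)|) +
    lam * ∑ i : Fin k, L i * |f i - v i| ^ p

/-- The discrete energy with `L^1` fidelity term (`p = 1`). -/
noncomputable def G1 (k : ℕ) (lam : ℝ) (L f : Fin k → ℝ) (v : Fin k → ℝ) : ℝ :=
  (∑ i : Fin k, if i.val = 0 then 0 else |v i - v (pred i)|) +
    lam * ∑ i : Fin k, L i * |f i - v i|

/-- If `|d| ≤ |A|` then `|A - d| + |A + d| = 2|A|`. -/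
lemma abs_sub_add_abs_add_eq (A d : ℝ) (h : |d| ≤ |A|) : |A - d| + |A + d| = 2 * |A| := by
  rcases le_total 0 A with hA | hA
  · rw [abs_of_nonneg hA] at h
    rw [abs_of_nonneg hA]
    rw [abs_le] at h
    rw [abs_of_nonneg (by linarith), abs_of_nonneg (by linarith)]; ring
  · rw [abs_of_nonpos hA] at h
    rw [abs_of_nonpos hA]
    rw [abs_le] at h
    rw [abs_of_nonpos (by linarith), abs_of_nonpos (by linarith)]; ring

/-- Clamping to `[m, M]` is 1-Lipschitz. -/
lemma clamp_lip (m M a b : ℝ) : |max m (min M a) - max m (min M b)| ≤ |a - b| := by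
  rw [abs_sub_le_iff]
  constructor <;>
  · rcases max_cases m (min M a) with ⟨h1, h1'⟩ | ⟨h1, h1'⟩ <;>
    rcases max_cases m (min M b) with ⟨h3, h3'⟩ | ⟨h3, h3'⟩ <;>
    rcases min_cases M a with ⟨h5, h5'⟩ | ⟨h5, h5'⟩ <;>
    rcases min_cases M b with ⟨h7, h7'⟩ | ⟨h7, h7'⟩ <;>
    simp_all <;>
    linarith [le_abs_self (a - b), le_abs_self (b - a), abs_sub_comm a b, abs_nonneg (a - b)]

/-- Clamping to `[m, M]` moves points closer to any point of `[m, M]`. -/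
lemma clamp_near (m M fi a : ℝ) (h1 : m ≤ fi) (h2 : fi ≤ M) :
    |fi - max m (min M a)| ≤ |fi - a| := by
  rw [abs_sub_le_iff]
  constructor <;>
  · rcases max_cases m (min M a) with ⟨g1, g1'⟩ | ⟨g1, g1'⟩ <;>
    rcases min_cases M a with ⟨g5, g5'⟩ | ⟨g5, g5'⟩ <;>
    simp_all <;>
    linarith [le_abs_self (fi - a), le_abs_self (a - fi), abs_sub_comm fi a, abs_nonneg (fi - a)]

/-- A global minimizer of `G1` exists (clamp to the box `[min f, max f]^k` and use
compactness). -/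
lemma exists_min_G1 (k : ℕ) (hk : 1 ≤ k) (lam : ℝ) (hlam : 0 < lam)
    (L f : Fin k → ℝ) (hL : ∀ i, 0 < L i) :
    ∃ u : Fin k → ℝ, ∀ v, G1 k lam L f u ≤ G1 k lam L f v := by
  haveI : Nonempty (Fin k) := ⟨⟨0, hk⟩⟩
  set m := Finset.univ.inf' Finset.univ_nonempty f with hm
  set M := Finset.univ.sup' Finset.univ_nonempty f with hM
  have hmf : ∀ i, m ≤ f i := fun i => Finset.inf'_le f (Finset.mem_univ i)
  have hfM : ∀ i, f i ≤ M := fun i => Finset.le_sup' f (Finset.mem_univ i)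
  have hmM : m ≤ M := le_trans (hmf ⟨0, hk⟩) (hfM ⟨0, hk⟩)
  set B : Set (Fin k → ℝ) := Set.Icc (fun _ => m) (fun _ => M) with hB
  have hBc : IsCompact B := isCompact_Icc
  have hBne : B.Nonempty := ⟨fun _ => m, by
    constructor <;> intro i
    · exact le_refl m
    · exact hmM⟩
  have hcont : Continuous (G1 k lam L f) := by
    unfold G1
    apply Continuous.add
    · apply continuous_finset_sum
      intro i _
      by_cases h : i.val = 0
      · simp only [h, if_true]; exact continuous_const
      · simp only [if_neg h]
        exact ((continuous_apply i).sub (continuous_apply (pred i))).abs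
    · apply Continuous.mul continuous_const
      apply continuous_finset_sum
      intro i _
      exact continuous_const.mul ((continuous_const.sub (continuous_apply i)).abs)
  obtain ⟨u0, hu0B, hu0min⟩ := hBc.exists_isMinOn hBne hcont.continuousOn
  refine ⟨u0, fun v => ?_⟩
  set w : Fin k → ℝ := fun i => max m (min M (v i)) with hw
  have hwB : w ∈ B := by
    constructor <;> intro i
    · exact le_max_left _ _
    · exact max_le hmM (min_le_left _ _)
  have h1 : G1 k lam L f u0 ≤ G1 k lam L f w := hu0min hwB
  have h2 : G1 k lam L f w ≤ G1 k lam L f v := by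
    unfold G1
    apply add_le_add
    · apply Finset.sum_le_sum
      intro i _
      by_cases h : i.val = 0
      · simp [h]
      · simp only [if_neg h]
        exact clamp_lip m M (v i) (v (pred i))
    · apply mul_le_mul_of_nonneg_left _ (le_of_lt hlam)
      apply Finset.sum_le_sum
      intro i _
      exact mul_le_mul_of_nonneg_left (clamp_near m M (f i) (v i) (hmf i) (hfM i))
        (le_of_lt (hL i))
  linarith

/-- From a minimizer having a level `c` which is not a value of `f`, produce a minimizer
where the level `c` has been removed (and no new non-`f` values appear). -/
lemma step_G1 (k : ℕ) (hk : 1 ≤ k) (lam : ℝ) (L f : Fin k → ℝ)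
    (u : Fin k → ℝ) (hmin : ∀ v, G1 k lam L f u ≤ G1 k lam L f v)
    (c : ℝ) (hcf : c ∉ Finset.image f Finset.univ) :
    ∃ u' : Fin k → ℝ, (∀ v, G1 k lam L f u' ≤ G1 k lam L f v) ∧
      (Finset.image u' Finset.univ \ Finset.image f Finset.univ) ⊆
        (Finset.image u Finset.univ \ Finset.image f Finset.univ).erase c := by
  classical
  have hfne : ∀ i, f i ≠ c := by
    intro i h
    exact hcf (Finset.mem_image.mpr ⟨i, Finset.mem_univ i, h⟩)
  set T : Finset ℝ :=
    ((Finset.image u Finset.univ ∪ Finset.image f Finset.univ).erase c) with hT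
  have hTne : T.Nonempty := by
    refine ⟨f ⟨0, hk⟩, ?_⟩
    rw [hT, Finset.mem_erase]
    exact ⟨hfne _, Finset.mem_union_right _ (Finset.mem_image_of_mem f (Finset.mem_univ _))⟩
  obtain ⟨x0, hx0T, hx0min⟩ := T.exists_min_image (fun x => |x - c|) hTne
  have hx0c : x0 ≠ c := (Finset.mem_erase.mp hx0T).1
  have hbound : ∀ x, x ≠ c → (x ∈ Finset.image u Finset.univ ∨ x ∈ Finset.image f Finset.univ) →
      |x0 - c| ≤ |x - c| := by
    intro x hx hmem
    have : x ∈ T := Finset.mem_erase.mpr ⟨hx, Finset.mem_union.mpr hmem⟩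
    exact hx0min x this
  set u' : Fin k → ℝ := fun i => if u i = c then x0 else u i with hu'
  set u'' : Fin k → ℝ := fun i => if u i = c then c - (x0 - c) else u i with hu''
  have humem : ∀ i, u i ≠ c → |x0 - c| ≤ |u i - c| := fun i h =>
    hbound _ h (Or.inl (Finset.mem_image_of_mem u (Finset.mem_univ i)))
  have hfmem : ∀ i, |x0 - c| ≤ |f i - c| := fun i =>
    hbound _ (hfne i) (Or.inr (Finset.mem_image_of_mem f (Finset.mem_univ i)))
  have hu'val : ∀ i, u i = c → u' i = x0 := by intro i h; simp [hu', h]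
  have hu'val' : ∀ i, u i ≠ c → u' i = u i := by intro i h; simp [hu', h]
  have hu''val : ∀ i, u i = c → u'' i = c - (x0 - c) := by intro i h; simp [hu'', h]
  have hu''val' : ∀ i, u i ≠ c → u'' i = u i := by intro i h; simp [hu'', h]
  have hFid : ∀ i, L i * |f i - u' i| + L i * |f i - u'' i| = 2 * (L i * |f i - u i|) := by
    intro i
    by_cases h : u i = c
    · rw [hu'val i h, hu''val i h]
      have e1 : f i - x0 = (f i - c) - (x0 - c) := by ring
      have e2 : f i - (c - (x0 - c)) = (f i - c) + (x0 - c) := by ring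
      rw [e1, e2, ← mul_add, abs_sub_add_abs_add_eq _ _ (hfmem i), h]
      ring
    · rw [hu'val' i h, hu''val' i h]; ring
  have hTV : ∀ i : Fin k, |u' i - u' (pred i)| + |u'' i - u'' (pred i)|
      = 2 * |u i - u (pred i)| := by
    intro i
    by_cases h1 : u i = c <;> by_cases h2 : u (pred i) = c
    · rw [hu'val i h1, hu'val _ h2, hu''val i h1, hu''val _ h2, h1, h2]
      simp
    · rw [hu'val i h1, hu'val' _ h2, hu''val i h1, hu''val' _ h2]
      have e1 : x0 - u (pred i) = (u i - u (pred i)) + (x0 - c) := by rw [h1]; ring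
      have e2 : c - (x0 - c) - u (pred i) = (u i - u (pred i)) - (x0 - c) := by rw [h1]; ring
      rw [e1, e2, add_comm]
      apply abs_sub_add_abs_add_eq
      have h3 := humem (pred i) h2
      calc |x0 - c| ≤ |u (pred i) - c| := h3
        _ = |u i - u (pred i)| := by rw [h1, abs_sub_comm]
    · rw [hu'val' i h1, hu'val _ h2, hu''val' i h1, hu''val _ h2]
      have e1 : u i - x0 = (u i - u (pred i)) - (x0 - c) := by rw [h2]; ring
      have e2 : u i - (c - (x0 - c)) = (u i - u (pred i)) + (x0 - c) := by rw [h2]; ring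
      rw [e1, e2]
      apply abs_sub_add_abs_add_eq
      have h3 := humem i h1
      calc |x0 - c| ≤ |u i - c| := h3
        _ = |u i - u (pred i)| := by rw [h2]
    · rw [hu'val' i h1, hu'val' _ h2, hu''val' i h1, hu''val' _ h2]; ring
  have e1 : (∑ i : Fin k, if i.val = 0 then 0 else |u' i - u' (pred i)|)
      + (∑ i : Fin k, if i.val = 0 then 0 else |u'' i - u'' (pred i)|)
      = 2 * ∑ i : Fin k, if i.val = 0 then 0 else |u i - u (pred i)| := by
    rw [← Finset.sum_add_distrib, Finset.mul_sum]
    refine Finset.sum_congr rfl fun i _ => ?_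
    by_cases h : i.val = 0
    · simp [h]
    · simp only [if_neg h]; exact hTV i
  have e2 : (∑ i : Fin k, L i * |f i - u' i|) + (∑ i : Fin k, L i * |f i - u'' i|)
      = 2 * ∑ i : Fin k, L i * |f i - u i| := by
    rw [← Finset.sum_add_distrib, Finset.mul_sum]
    exact Finset.sum_congr rfl fun i _ => hFid i
  have hsum : G1 k lam L f u' + G1 k lam L f u'' = 2 * G1 k lam L f u := by
    unfold G1
    linear_combination e1 + lam * e2
  have hu'min : ∀ v, G1 k lam L f u' ≤ G1 k lam L f v := by
    intro v
    have h1 := hmin u'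
    have h2 := hmin u''
    have h3 := hmin v
    linarith
  refine ⟨u', hu'min, ?_⟩
  intro x hx
  rw [Finset.mem_sdiff] at hx
  obtain ⟨hxu', hxf⟩ := hx
  rw [Finset.mem_image] at hxu'
  obtain ⟨i, _, hi⟩ := hxu'
  rw [Finset.mem_erase, Finset.mem_sdiff]
  by_cases h : u i = c
  · rw [hu'val i h] at hi
    subst hi
    refine ⟨hx0c, ?_, hxf⟩
    have := Finset.mem_erase.mp hx0T
    rcases Finset.mem_union.mp this.2 with h' | h'
    · exact h'
    · exact absurd h' hxf
  · rw [hu'val' i h] at hi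
    subst hi
    exact ⟨h, Finset.mem_image_of_mem u (Finset.mem_univ i), hxf⟩

/-- Induction: from any minimizer one obtains a minimizer all of whose entries are values
of `f`. -/
lemma reduce_G1 (k : ℕ) (hk : 1 ≤ k) (lam : ℝ) (L f : Fin k → ℝ) :
    ∀ (n : ℕ) (u : Fin k → ℝ), (∀ v, G1 k lam L f u ≤ G1 k lam L f v) →
      (Finset.image u Finset.univ \ Finset.image f Finset.univ).card ≤ n →
      ∃ u' : Fin k → ℝ, (∀ v, G1 k lam L f u' ≤ G1 k lam L f v) ∧
        ∀ i, u' i ∈ Set.range f := by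
  intro n
  induction n with
  | zero =>
    intro u hmin hcard
    refine ⟨u, hmin, fun i => ?_⟩
    have hempty : Finset.image u Finset.univ \ Finset.image f Finset.univ = ∅ :=
      Finset.card_eq_zero.mp (Nat.le_zero.mp hcard)
    have : u i ∈ Finset.image f Finset.univ := by
      by_contra h
      have : u i ∈ Finset.image u Finset.univ \ Finset.image f Finset.univ :=
        Finset.mem_sdiff.mpr ⟨Finset.mem_image_of_mem u (Finset.mem_univ i), h⟩
      rw [hempty] at this
      exact absurd this (Finset.notMem_empty _)
    obtain ⟨j, _, hj⟩ := Finset.mem_image.mp this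
    exact ⟨j, hj⟩
  | succ n ih =>
    intro u hmin hcard
    by_cases hs : (Finset.image u Finset.univ \ Finset.image f Finset.univ) = ∅
    · refine ⟨u, hmin, fun i => ?_⟩
      have : u i ∈ Finset.image f Finset.univ := by
        by_contra h
        have : u i ∈ Finset.image u Finset.univ \ Finset.image f Finset.univ :=
          Finset.mem_sdiff.mpr ⟨Finset.mem_image_of_mem u (Finset.mem_univ i), h⟩
        rw [hs] at this
        exact absurd this (Finset.notMem_empty _)
      obtain ⟨j, _, hj⟩ := Finset.mem_image.mp this
      exact ⟨j, hj⟩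
    · obtain ⟨c, hc⟩ := Finset.nonempty_of_ne_empty hs
      have hcmem := Finset.mem_sdiff.mp hc
      obtain ⟨u', hu'min, hu'sub⟩ := step_G1 k hk lam L f u hmin c hcmem.2
      apply ih u' hu'min
      calc (Finset.image u' Finset.univ \ Finset.image f Finset.univ).card
          ≤ ((Finset.image u Finset.univ \ Finset.image f Finset.univ).erase c).card :=
            Finset.card_le_card hu'sub
        _ = (Finset.image u Finset.univ \ Finset.image f Finset.univ).card - 1 :=
            Finset.card_erase_of_mem hc
        _ ≤ n := by omega

/-- for `p = 1` there is a minimizer of `G` all of whose entries are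
values of `f`. -/
theorem stmt6 (k : ℕ) (hk : 1 ≤ k) (lam : ℝ) (hlam : 0 < lam)
    (L f : Fin k → ℝ) (hL : ∀ i, 0 < L i) :
    ∃ u : Fin k → ℝ, (∀ v : Fin k → ℝ, G1 k lam L f u ≤ G1 k lam L f v) ∧
      ∀ i : Fin k, u i ∈ Set.range f := by
  obtain ⟨u0, hu0⟩ := exists_min_G1 k hk lam hlam L f hL
  exact reduce_G1 k hk lam L f
    (Finset.image u0 Finset.univ \ Finset.image f Finset.univ).card u0 hu0 le_rfl
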